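/- Let S consist of 2n points given as n pairs {p_i, q_i} in a metric space, let T be a minimum spanning tree of S, let h be a maximum-weight edge of T, and let T_1, T_2 be the vertex sets of the two components of T after removing h. If some pair has both of its points in T_1 or both in T_2, then mstCost(S) ≤ 4 · min over all feasible colorings S = R ∪ B of max(mstCost(R), mstCost(B)). -/

import Mathlib

variable {α : Type*} [MetricSpace α] [DecidableEq α]

/-- Two points are connected via the edge set `E` (edges usable in both directions). -/
def EdgeConn (E : Finset (α × α)) (x y : α) : Prop :=
  Relation.ReflTransGen (fun a b => (a, b) ∈ E ∨ (b, a) ∈ E) x y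

/-- `E` is (the edge set of) a spanning tree of the complete graph on the finite
point set `X`. -/
def IsSpanningTreeOn (X : Finset α) (E : Finset (α × α)) : Prop :=
  (∀ e ∈ E, e.1 ∈ X ∧ e.2 ∈ X) ∧ E.card + 1 = X.card ∧
    ∀ x ∈ X, ∀ y ∈ X, EdgeConn E x y

/-- The minimum total edge length of a spanning tree on `X`. -/
noncomputable def mstCost (X : Finset α) : ℝ :=
  sInf {c | ∃ E : Finset (α × α), IsSpanningTreeOn X E ∧ c = ∑ e ∈ E, dist e.1 e.2}

lemma edgeConn_symm {E : Finset (α × α)} {x y : α} (h : EdgeConn E x y) : EdgeConn E y x :=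
  (@Relation.ReflTransGen.stdSymm _ (fun a b => (a, b) ∈ E ∨ (b, a) ∈ E) ⟨fun _ _ hab => hab.symm⟩).symm _ _ h

lemma edgeConn_mono {E F : Finset (α × α)} (hEF : E ⊆ F) {x y : α} (h : EdgeConn E x y) :
    EdgeConn F x y :=
  Relation.ReflTransGen.mono (r := fun a b => (a, b) ∈ E ∨ (b, a) ∈ E)
    (p := fun a b => (a, b) ∈ F ∨ (b, a) ∈ F) (fun _ _ hab => hab.imp (hEF ·) (hEF ·)) _ _ h

lemma exists_flip {r : α → α → Prop} {C : α → Prop} {x y : α}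
    (h : Relation.ReflTransGen r x y) (hx : C x) :
    ¬ C y → ∃ a b, r a b ∧ C a ∧ ¬ C b := by
  induction h with
  | refl => exact fun hy => absurd hx hy
  | @tail m c hxm hmc ih =>
    intro hy
    by_cases hm : C m
    · exact ⟨m, c, hmc, hm, hy⟩
    · exact ih hm

lemma treeCost_nonneg (E : Finset (α × α)) : 0 ≤ ∑ e ∈ E, dist e.1 e.2 :=
  Finset.sum_nonneg fun _ _ => dist_nonneg

lemma bddBelow_costs (X : Finset α) :
    BddBelow {c | ∃ E : Finset (α × α), IsSpanningTreeOn X E ∧ c = ∑ e ∈ E, dist e.1 e.2} :=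
  ⟨0, fun _ ⟨E, _, hc⟩ => hc ▸ treeCost_nonneg E⟩

lemma mstCost_le {X : Finset α} {E : Finset (α × α)} (hE : IsSpanningTreeOn X E) :
    mstCost X ≤ ∑ e ∈ E, dist e.1 e.2 :=
  csInf_le (bddBelow_costs X) ⟨E, hE, rfl⟩

lemma exists_spanningTree (X : Finset α) (hX : X.Nonempty) :
    ∃ E : Finset (α × α), IsSpanningTreeOn X E := by
  classical
  obtain ⟨x0, hx0⟩ := hX
  refine ⟨(X.erase x0).image (fun y => (x0, y)), ?_, ?_, ?_⟩
  · intro e he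
    simp only [Finset.mem_image] at he
    obtain ⟨y, hy, rfl⟩ := he
    exact ⟨hx0, Finset.mem_of_mem_erase hy⟩
  · rw [Finset.card_image_of_injective _ (fun a b hab => by simpa using hab),
      Finset.card_erase_of_mem hx0]
    have : 0 < X.card := Finset.card_pos.mpr ⟨x0, hx0⟩
    omega
  · intro u hu v hv
    have conn0 : ∀ w ∈ X, EdgeConn ((X.erase x0).image (fun y => (x0, y))) x0 w := by
      intro w hw
      by_cases hwx : w = x0
      · subst hwx; exact Relation.ReflTransGen.refl
      · exact Relation.ReflTransGen.single
          (Or.inl (Finset.mem_image.mpr ⟨w, Finset.mem_erase.mpr ⟨hwx, hw⟩, rfl⟩))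
    exact (edgeConn_symm (conn0 u hu)).trans (conn0 v hv)

set_option linter.unusedSectionVars false

lemma cross_ge {S : Finset α} {T : Finset (α × α)} (hT : IsSpanningTreeOn S T)
    (hTmin : (∑ e ∈ T, dist e.1 e.2) = mstCost S)
    {h : α × α} (hh : h ∈ T)
    {T₁ T₂ : Finset α} (hpart : T₁ ∪ T₂ = S) (hdisj : Disjoint T₁ T₂)
    (hcomp : ∀ x ∈ S, ∀ y ∈ S,
      EdgeConn (T.erase h) x y ↔ ((x ∈ T₁ ∧ y ∈ T₁) ∨ (x ∈ T₂ ∧ y ∈ T₂)))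
    {x y : α} (hx : x ∈ T₁) (hy : y ∈ T₂) : dist h.1 h.2 ≤ dist x y := by
  by_contra hlt
  push_neg at hlt
  have hxS : x ∈ S := hpart ▸ Finset.mem_union_left _ hx
  have hyS : y ∈ S := hpart ▸ Finset.mem_union_right _ hy
  have hnm : (x, y) ∉ T.erase h := by
    intro hmem
    rcases (hcomp x hxS y hyS).1 (Relation.ReflTransGen.single (Or.inl hmem)) with
      ⟨_, hy1⟩ | ⟨hx2, _⟩
    · exact (Finset.disjoint_right.1 hdisj hy) hy1
    · exact (Finset.disjoint_left.1 hdisj hx) hx2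
  set T' : Finset (α × α) := insert (x, y) (T.erase h) with hT'
  have hcard : 0 < T.card := Finset.card_pos.mpr ⟨h, hh⟩
  have hspan : IsSpanningTreeOn S T' := by
    refine ⟨?_, ?_, ?_⟩
    · intro e he
      rcases Finset.mem_insert.1 he with rfl | he'
      · exact ⟨hxS, hyS⟩
      · exact hT.1 e (Finset.mem_of_mem_erase he')
    · rw [Finset.card_insert_of_notMem hnm, Finset.card_erase_of_mem hh]
      have := hT.2.1
      omega
    · have toX : ∀ u ∈ S, EdgeConn T' u x := by
        intro u hu
        rcases Finset.mem_union.1 (hpart ▸ hu : u ∈ T₁ ∪ T₂) with hu1 | hu2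
        · exact edgeConn_mono (Finset.subset_insert _ _)
            ((hcomp u hu x hxS).2 (Or.inl ⟨hu1, hx⟩))
        · have h1 : EdgeConn T' u y := edgeConn_mono (Finset.subset_insert _ _)
            ((hcomp u hu y hyS).2 (Or.inr ⟨hu2, hy⟩))
          exact h1.trans (Relation.ReflTransGen.single (Or.inr (Finset.mem_insert_self _ _)))
      intro u hu v hv
      exact (toX u hu).trans (edgeConn_symm (toX v hv))
  have hcost : ∑ e ∈ T', dist e.1 e.2 = dist x y + (∑ e ∈ T, dist e.1 e.2 - dist h.1 h.2) := by
    rw [hT', Finset.sum_insert hnm, Finset.sum_erase_eq_sub hh]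
  have := mstCost_le hspan
  rw [hcost] at this
  linarith

lemma mst_cross_lb {S : Finset α} {T₁ T₂ : Finset α} {h : α × α}
    (hlb : ∀ x ∈ T₁, ∀ y ∈ T₂, dist h.1 h.2 ≤ dist x y)
    (hpart : T₁ ∪ T₂ = S) (hdisj : Disjoint T₁ T₂)
    {X : Finset α} (hXS : X ⊆ S)
    {x₁ x₂ : α} (hx₁X : x₁ ∈ X) (hx₁ : x₁ ∈ T₁) (hx₂X : x₂ ∈ X) (hx₂ : x₂ ∈ T₂) :
    dist h.1 h.2 ≤ mstCost X := by
  classical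
  obtain ⟨E0, hE0⟩ := exists_spanningTree X ⟨x₁, hx₁X⟩
  refine le_csInf ⟨_, E0, hE0, rfl⟩ ?_
  rintro c ⟨E, hE, rfl⟩
  have hconn := hE.2.2 x₁ hx₁X x₂ hx₂X
  have hx₂n : ¬ x₂ ∈ T₁ := fun hx => (Finset.disjoint_left.1 hdisj hx) hx₂
  obtain ⟨a, b, hr, ha, hb⟩ := exists_flip (C := (· ∈ T₁)) hconn hx₁ hx₂n
  have hbT₂ : ∀ {u : α}, u ∈ X → u ∉ T₁ → u ∈ T₂ := by
    intro u huX hun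
    rcases Finset.mem_union.1 (hpart ▸ hXS huX : u ∈ T₁ ∪ T₂) with h1 | h2
    · exact absurd h1 hun
    · exact h2
  rcases hr with h1 | h1
  · have hm := hE.1 _ h1
    have : dist h.1 h.2 ≤ dist a b := hlb a ha b (hbT₂ hm.2 hb)
    exact this.trans (Finset.single_le_sum (f := fun e => dist e.1 e.2)
      (fun _ _ => dist_nonneg) h1)
  · have hm := hE.1 _ h1
    have : dist h.1 h.2 ≤ dist a b := hlb a ha b (hbT₂ hm.1 hb)
    rw [dist_comm a b] at this
    exact this.trans (Finset.single_le_sum (f := fun e => dist e.1 e.2)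
      (fun _ _ => dist_nonneg) h1)

/-- `S` consists of `n` pairs `{pts (i, false), pts (i, true)}`. Let `T` be
a minimum spanning tree of `S`, `h` a maximum-weight edge of `T`, and `T₁, T₂` the vertex
sets of the two components of `T` after removing `h`. If some pair has both of its points
in `T₁` or both in `T₂`, then
`mstCost S ≤ 4 · min over feasible colorings of max (mstCost R) (mstCost B)`. -/
theorem mst_total_bounded_by_minmax_opt
    (n : ℕ) (hn : 1 ≤ n)
    (pts : Fin n × Bool → α) (hinj : Function.Injective pts)
    (S : Finset α) (hS : S = Finset.image pts Finset.univ)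
    (T : Finset (α × α)) (hT : IsSpanningTreeOn S T)
    (hTmin : (∑ e ∈ T, dist e.1 e.2) = mstCost S)
    (h : α × α) (hh : h ∈ T) (hmax : ∀ e ∈ T, dist e.1 e.2 ≤ dist h.1 h.2)
    (T₁ T₂ : Finset α) (hpart : T₁ ∪ T₂ = S) (hdisj : Disjoint T₁ T₂)
    (hne1 : T₁.Nonempty) (hne2 : T₂.Nonempty)
    (hcomp : ∀ x ∈ S, ∀ y ∈ S,
      EdgeConn (T.erase h) x y ↔ ((x ∈ T₁ ∧ y ∈ T₁) ∨ (x ∈ T₂ ∧ y ∈ T₂)))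
    (hpair : ∃ i : Fin n, (pts (i, false) ∈ T₁ ∧ pts (i, true) ∈ T₁) ∨
                          (pts (i, false) ∈ T₂ ∧ pts (i, true) ∈ T₂)) :
    mstCost S ≤ 4 *
      ⨅ σ : Fin n → Bool,
        max (mstCost (Finset.image (fun i => pts (i, σ i)) Finset.univ))
            (mstCost (Finset.image (fun i => pts (i, !(σ i))) Finset.univ)) := by
  classical
  have hFinN : Nonempty (Fin n) := ⟨⟨0, hn⟩⟩
  obtain ⟨i, hi⟩ := hpair
  have hmemS : ∀ z : Fin n × Bool, pts z ∈ S := fun z =>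
    hS ▸ Finset.mem_image_of_mem pts (Finset.mem_univ z)
  have hlb : ∀ x ∈ T₁, ∀ y ∈ T₂, dist h.1 h.2 ≤ dist x y :=
    fun x hx y hy => cross_ge hT hTmin hh hpart hdisj hcomp hx hy
  have hdh : 0 ≤ dist h.1 h.2 := dist_nonneg
  -- per-coloring bound
  have key : ∀ σ : Fin n → Bool,
      mstCost S ≤ 4 * max (mstCost (Finset.image (fun i => pts (i, σ i)) Finset.univ))
        (mstCost (Finset.image (fun i => pts (i, !(σ i))) Finset.univ)) := by
    intro σ
    set R : Finset α := Finset.image (fun i => pts (i, σ i)) Finset.univ with hR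
    set B : Finset α := Finset.image (fun i => pts (i, !(σ i))) Finset.univ with hB
    have hRS : R ⊆ S := by
      intro x hx
      obtain ⟨j, _, rfl⟩ := Finset.mem_image.1 hx
      exact hmemS _
    have hBS : B ⊆ S := by
      intro x hx
      obtain ⟨j, _, rfl⟩ := Finset.mem_image.1 hx
      exact hmemS _
    have hRB : Disjoint R B := by
      rw [Finset.disjoint_left]
      intro x hxR hxB
      obtain ⟨j, _, hj⟩ := Finset.mem_image.1 hxR
      obtain ⟨k, _, hk⟩ := Finset.mem_image.1 hxB
      have := hinj (hj.trans hk.symm)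
      have h2 : σ j = !(σ k) := (Prod.mk.injEq _ _ _ _ ▸ this).2
      have h1 : j = k := (Prod.mk.injEq _ _ _ _ ▸ this).1
      subst h1
      simp at h2
    have hRuB : R ∪ B = S := by
      apply Finset.Subset.antisymm (Finset.union_subset hRS hBS)
      intro x hx
      rw [hS, Finset.mem_image] at hx
      obtain ⟨⟨j, b⟩, _, rfl⟩ := hx
      rcases Bool.eq_or_eq_not b (σ j) with rfl | rfl
      · exact Finset.mem_union_left _ (Finset.mem_image_of_mem _ (Finset.mem_univ j))
      · exact Finset.mem_union_right _ (Finset.mem_image_of_mem _ (Finset.mem_univ j))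
    have hRne : R.Nonempty := Finset.Nonempty.image (Finset.univ_nonempty) _
    have hBne : B.Nonempty := Finset.Nonempty.image (Finset.univ_nonempty) _
    -- pick colored pair points with connection
    have hpq : ∃ u v, u ∈ R ∧ v ∈ B ∧ EdgeConn (T.erase h) u v ∧
        ((u ∈ T₁ ∧ v ∈ T₁) ∨ (u ∈ T₂ ∧ v ∈ T₂)) := by
      have hconn : EdgeConn (T.erase h) (pts (i, false)) (pts (i, true)) :=
        (hcomp _ (hmemS _) _ (hmemS _)).2 hi
      cases hσi : σ i with
      | false =>
        refine ⟨pts (i, false), pts (i, true), ?_, ?_, hconn, hi⟩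
        · exact Finset.mem_image.2 ⟨i, Finset.mem_univ i, by simp [hσi]⟩
        · exact Finset.mem_image.2 ⟨i, Finset.mem_univ i, by simp [hσi]⟩
      | true =>
        refine ⟨pts (i, true), pts (i, false), ?_, ?_, edgeConn_symm hconn, ?_⟩
        · exact Finset.mem_image.2 ⟨i, Finset.mem_univ i, by simp [hσi]⟩
        · exact Finset.mem_image.2 ⟨i, Finset.mem_univ i, by simp [hσi]⟩
        · exact hi.imp (fun ⟨a1, a2⟩ => ⟨a2, a1⟩) (fun ⟨a1, a2⟩ => ⟨a2, a1⟩)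
    obtain ⟨u, v, huR, hvB, huv, hside⟩ := hpq
    -- bridge edge
    have hvnR : v ∉ R := Finset.disjoint_right.1 hRB hvB
    obtain ⟨a, b, hr, haR, hbnR⟩ := exists_flip (C := (· ∈ R)) huv huR hvnR
    have hedge : ((a, b) ∈ T ∧ a ∈ S ∧ b ∈ S) ∨ ((b, a) ∈ T ∧ a ∈ S ∧ b ∈ S) := by
      rcases hr with h1 | h1
      · have h2 := Finset.mem_of_mem_erase h1
        exact Or.inl ⟨h2, (hT.1 _ h2).1, (hT.1 _ h2).2⟩
      · have h2 := Finset.mem_of_mem_erase h1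
        exact Or.inr ⟨h2, (hT.1 _ h2).2, (hT.1 _ h2).1⟩
    have haS : a ∈ S := by rcases hedge with ⟨_, h2, _⟩ | ⟨_, h2, _⟩ <;> exact h2
    have hbS : b ∈ S := by rcases hedge with ⟨_, _, h2⟩ | ⟨_, _, h2⟩ <;> exact h2
    have hbB : b ∈ B := by
      rcases Finset.mem_union.1 (hRuB ▸ hbS : b ∈ R ∪ B) with h1 | h1
      · exact absurd h1 hbnR
      · exact h1
    have hdab : dist a b ≤ dist h.1 h.2 := by
      rcases hedge with ⟨h1, _, _⟩ | ⟨h1, _, _⟩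
      · exact hmax _ h1
      · rw [dist_comm]; exact hmax _ h1
    have hanB : a ∉ B := Finset.disjoint_left.1 hRB haR
    -- combined tree bound
    have hkey : ∀ ER : Finset (α × α), IsSpanningTreeOn R ER →
        ∀ EB : Finset (α × α), IsSpanningTreeOn B EB →
        mstCost S ≤ dist a b + ((∑ e ∈ ER, dist e.1 e.2) + ∑ e ∈ EB, dist e.1 e.2) := by
      intro ER hER EB hEB
      have hdisjE : Disjoint ER EB := by
        rw [Finset.disjoint_left]
        intro e heR heB
        exact Finset.disjoint_left.1 hRB (hER.1 e heR).1 (hEB.1 e heB).1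
      have hnm : (a, b) ∉ ER ∪ EB := by
        intro hmem
        rcases Finset.mem_union.1 hmem with h1 | h1
        · exact hbnR (hER.1 _ h1).2
        · exact hanB (hEB.1 _ h1).1
      set F : Finset (α × α) := insert (a, b) (ER ∪ EB) with hF
      have hSc : S.card = R.card + B.card := by
        rw [← hRuB, Finset.card_union_of_disjoint hRB]
      have hspanF : IsSpanningTreeOn S F := by
        refine ⟨?_, ?_, ?_⟩
        · intro e he
          rcases Finset.mem_insert.1 he with rfl | he'
          · exact ⟨hRS haR, hBS hbB⟩
          · rcases Finset.mem_union.1 he' with h1 | h1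
            · exact ⟨hRS (hER.1 _ h1).1, hRS (hER.1 _ h1).2⟩
            · exact ⟨hBS (hEB.1 _ h1).1, hBS (hEB.1 _ h1).2⟩
        · rw [Finset.card_insert_of_notMem hnm, Finset.card_union_of_disjoint hdisjE]
          have h1 := hER.2.1
          have h2 := hEB.2.1
          omega
        · have hERF : ER ⊆ F := (Finset.subset_union_left).trans (Finset.subset_insert _ _)
          have hEBF : EB ⊆ F := (Finset.subset_union_right).trans (Finset.subset_insert _ _)
          have toA : ∀ w ∈ S, EdgeConn F w a := by
            intro w hw
            rcases Finset.mem_union.1 (hRuB ▸ hw : w ∈ R ∪ B) with h1 | h1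
            · exact edgeConn_mono hERF (hER.2.2 w h1 a haR)
            · exact (edgeConn_mono hEBF (hEB.2.2 w h1 b hbB)).trans
                (Relation.ReflTransGen.single (Or.inr (Finset.mem_insert_self _ _)))
          intro x hx y hy
          exact (toA x hx).trans (edgeConn_symm (toA y hy))
      have := mstCost_le hspanF
      rwa [hF, Finset.sum_insert hnm, Finset.sum_union hdisjE] at this
    obtain ⟨ER0, hER0⟩ := exists_spanningTree R hRne
    obtain ⟨EB0, hEB0⟩ := exists_spanningTree B hBne
    have h2 : mstCost S ≤ dist a b + (mstCost R + mstCost B) := by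
      have hRne' : {c | ∃ E : Finset (α × α), IsSpanningTreeOn R E ∧
          c = ∑ e ∈ E, dist e.1 e.2}.Nonempty := ⟨_, ER0, hER0, rfl⟩
      have hBne' : {c | ∃ E : Finset (α × α), IsSpanningTreeOn B E ∧
          c = ∑ e ∈ E, dist e.1 e.2}.Nonempty := ⟨_, EB0, hEB0, rfl⟩
      have step1 : mstCost S - dist a b - mstCost R ≤ mstCost B := by
        refine le_csInf hBne' ?_
        rintro c ⟨EB, hEB, rfl⟩
        have step2 : mstCost S - dist a b - (∑ e ∈ EB, dist e.1 e.2) ≤ mstCost R := by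
          refine le_csInf hRne' ?_
          rintro c' ⟨ER, hER, rfl⟩
          have := hkey ER hER EB hEB
          linarith
        linarith
      linarith
    -- max ≥ dist h
    have hM : dist h.1 h.2 ≤ max (mstCost R) (mstCost B) := by
      rcases hside with ⟨hu1, hv1⟩ | ⟨hu2, hv2⟩
      · obtain ⟨s, hs2⟩ := hne2
        have hsS : s ∈ S := hpart ▸ Finset.mem_union_right _ hs2
        rcases Finset.mem_union.1 (hRuB ▸ hsS : s ∈ R ∪ B) with hsR | hsB
        · exact le_trans (mst_cross_lb hlb hpart hdisj hRS huR hu1 hsR hs2) (le_max_left _ _)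
        · exact le_trans (mst_cross_lb hlb hpart hdisj hBS hvB hv1 hsB hs2) (le_max_right _ _)
      · obtain ⟨s, hs1⟩ := hne1
        have hsS : s ∈ S := hpart ▸ Finset.mem_union_left _ hs1
        rcases Finset.mem_union.1 (hRuB ▸ hsS : s ∈ R ∪ B) with hsR | hsB
        · exact le_trans (mst_cross_lb hlb hpart hdisj hRS hsR hs1 huR hu2) (le_max_left _ _)
        · exact le_trans (mst_cross_lb hlb hpart hdisj hBS hsB hs1 hvB hv2) (le_max_right _ _)
    have hmR : mstCost R ≤ max (mstCost R) (mstCost B) := le_max_left _ _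
    have hmB : mstCost B ≤ max (mstCost R) (mstCost B) := le_max_right _ _
    linarith
  have hinf : mstCost S / 4 ≤ ⨅ σ : Fin n → Bool,
      max (mstCost (Finset.image (fun i => pts (i, σ i)) Finset.univ))
        (mstCost (Finset.image (fun i => pts (i, !(σ i))) Finset.univ)) :=
    le_ciInf fun σ => by linarith [key σ]
  linarith
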